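/- (Leibniz formula) Let f, g : ℝ → ℝ, let m ∈ ℕ, and let t ∈ ℝ with t ∉ S. For 0 ≤ k ≤ m, let 𝒮^m_k be the set of all strings of length m consisting of exactly k occurrences of the operator h^∘ (where h^∘ f := f ∘ h) and m − k occurrences of the operator D_{n,q}, each string acting on f by composition of the m operators. Then D_{n,q}^m (f·g)(t) = ∑_{k=0}^{m} ( ∑_{L ∈ 𝒮^m_k} (L f)(t) ) · D_{n,q}^k g(t), where D_{n,q}^k denotes the k-fold iterate of D_{n,q}. (Note that if t ∉ S then h(t) ∉ S, so all the operators appearing are given by the difference-quotient formula.) -/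

import Mathlib

open Filter
open scoped Classical

noncomputable section

/-- `[k]_n = ∑_{i=0}^{k-1} n^i` (so `[0]_n = 0`). -/
def nbr (n k : ℕ) : ℕ := ∑ i ∈ Finset.range k, n ^ i

/-- `h(t) = q·t^n`. -/
def hfun (q : ℝ) (n : ℕ) (t : ℝ) : ℝ := q * t ^ n

/-- `θ = q^(1/(1-n))` (meaningful for `n ≥ 3`). -/
def theta (q : ℝ) (n : ℕ) : ℝ := q ^ ((1 : ℝ) / (1 - (n : ℝ)))

/-- `S = {0}` if `n = 1`, and `S = {-θ, 0, θ}` if `n ≥ 3`. -/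
def Sset (q : ℝ) (n : ℕ) : Set ℝ :=
  if n = 1 then {0} else {-theta q n, 0, theta q n}

/-- `I = (-θ, θ)` (all of `ℝ` when `n = 1`). -/
def Iset (q : ℝ) (n : ℕ) : Set ℝ :=
  if n = 1 then Set.univ else Set.Ioo (-theta q n) (theta q n)

/-- The `n,q`-power difference operator `D_{n,q}`. -/
def Dnq (q : ℝ) (n : ℕ) (f : ℝ → ℝ) (t : ℝ) : ℝ :=
  if t ∈ Sset q n then deriv f t
  else (f (q * t ^ n) - f t) / (q * t ^ n - t)

/-- The `k`-th summand of the series defining the `n,q`-integral `∫_0^x f(t) d_{n,q}t`. -/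
def nqSeq (q : ℝ) (n : ℕ) (f : ℝ → ℝ) (x : ℝ) (k : ℕ) : ℝ :=
  q ^ nbr n k * x ^ n ^ k * (q ^ n ^ k * x ^ (n ^ k * (n - 1)) - 1) *
    f (q ^ nbr n k * x ^ n ^ k)

/-- `∫_0^x f(t) d_{n,q}t`. -/
def nqInt0 (q : ℝ) (n : ℕ) (f : ℝ → ℝ) (x : ℝ) : ℝ := -∑' k : ℕ, nqSeq q n f x k

/-- `∫_a^b f(t) d_{n,q}t = ∫_0^b f(t) d_{n,q}t − ∫_0^a f(t) d_{n,q}t`. -/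
def nqInt (q : ℝ) (n : ℕ) (f : ℝ → ℝ) (a b : ℝ) : ℝ :=
  nqInt0 q n f b - nqInt0 q n f a

/-- The orbit `[s]_{n,q} = {q^{[k]_n}·s^{n^k} : k ∈ ℕ}`. -/
def nqOrbit (q : ℝ) (n : ℕ) (s : ℝ) : Set ℝ :=
  Set.range fun k : ℕ => q ^ nbr n k * s ^ n ^ k

/-- The `n,q`-interval `[a,b]_{n,q}`. -/
def nqInterval (q : ℝ) (n : ℕ) (a b : ℝ) : Set ℝ :=
  nqOrbit q n a ∪ nqOrbit q n b ∪ {0}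

variable {q : ℝ} {n : ℕ}

lemma theta_pos (hq0 : 0 < q) : 0 < theta q n := Real.rpow_pos_of_pos hq0 _

lemma hfun_strictMono (hq0 : 0 < q) (hn : Odd n) : StrictMono (hfun q n) := by
  have := hn.strictMono_pow (R := ℝ)
  exact fun a b hab => (mul_lt_mul_iff_right₀ hq0).2 (this hab)

lemma hfun_theta (hq0 : 0 < q) (hn : Odd n) (hn1 : n ≠ 1) :
    hfun q n (theta q n) = theta q n := by
  have h3 : 3 ≤ n := by rcases hn with ⟨k, rfl⟩; omega
  have hne : (1 : ℝ) - (n : ℝ) ≠ 0 := by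
    have : (3 : ℝ) ≤ (n : ℝ) := by exact_mod_cast h3
    nlinarith
  unfold hfun theta
  rw [← Real.rpow_natCast (q ^ ((1:ℝ)/(1-(n:ℝ)))) n, ← Real.rpow_mul hq0.le]
  nth_rewrite 1 [← Real.rpow_one q]
  rw [← Real.rpow_add hq0]
  congr 1
  field_simp
  ring

lemma hfun_fixed_of_mem (hq0 : 0 < q) (hn : Odd n) {s : ℝ} (hs : s ∈ Sset q n) :
    hfun q n s = s := by
  have hn0 : n ≠ 0 := by rcases hn with ⟨k, rfl⟩; omega
  unfold Sset at hs
  split_ifs at hs with h1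
  · simp only [Set.mem_singleton_iff] at hs
    subst hs; simp [hfun, hn0]
  · rcases hs with hs | hs | hs
    · rw [hs]
      have := hfun_theta hq0 hn h1
      simp only [hfun] at this ⊢
      rw [hn.neg_pow]; linarith
    · rw [hs]; simp [hfun, hn0]
    · rw [Set.mem_singleton_iff] at hs; rw [hs]; exact hfun_theta hq0 hn h1

lemma hfun_not_mem (hq0 : 0 < q) (hn : Odd n) {t : ℝ} (ht : t ∉ Sset q n) :
    hfun q n t ∉ Sset q n := by
  intro hmem
  have hfix : hfun q n (hfun q n t) = hfun q n t := hfun_fixed_of_mem hq0 hn hmem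
  have heq : hfun q n t = t := (hfun_strictMono hq0 hn).injective hfix
  exact ht (heq ▸ hmem)

lemma theta_pow (hq0 : 0 < q) (hn : Odd n) (hn1 : n ≠ 1) :
    theta q n ^ (n - 1) = q⁻¹ := by
  have h3 : 3 ≤ n := by rcases hn with ⟨k, rfl⟩; omega
  have hne : (1 : ℝ) - (n : ℝ) ≠ 0 := by
    have : (3 : ℝ) ≤ (n : ℝ) := by exact_mod_cast h3
    nlinarith
  unfold theta
  rw [← Real.rpow_natCast (q ^ ((1:ℝ)/(1-(n:ℝ)))) (n-1), ← Real.rpow_mul hq0.le]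
  rw [show ((1:ℝ)/(1-(n:ℝ))) * ((n-1 : ℕ) : ℝ) = -1 by
    have : ((n-1 : ℕ) : ℝ) = (n : ℝ) - 1 := by
      have : 1 ≤ n := by omega
      push_cast [this]; ring
    rw [this]; field_simp; ring]
  exact Real.rpow_neg_one q

lemma hfun_ne (hq0 : 0 < q) (hq1 : q < 1) (hn : Odd n) {t : ℝ} (ht : t ∉ Sset q n) :
    hfun q n t ≠ t := by
  intro heq
  apply ht
  unfold hfun at heq
  unfold Sset
  split_ifs with h1
  · -- n = 1 : q t = t
    subst h1
    simp only [pow_one] at heq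
    have : (q - 1) * t = 0 := by linarith
    rcases mul_eq_zero.1 this with h | h
    · exact absurd h (by nlinarith)
    · simpa using h
  · have ht0 : t ≠ 0 := by
      intro h0
      apply ht
      unfold Sset
      simp [h1, h0]
    have hn0 : n ≠ 0 := by rcases hn with ⟨k, rfl⟩; omega
    have hpow : t ^ (n - 1) = q⁻¹ := by
      have : t ^ n = t ^ (n-1) * t := by
        rw [← pow_succ]; congr 1; omega
      rw [this] at heq
      have hq' : q * t ^ (n-1) = 1 := by
        have h2 : (q * t ^ (n-1)) * t = 1 * t := by linear_combination heq
        exact mul_right_cancel₀ ht0 h2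
      field_simp
      linear_combination hq'
    have heven : Even (n - 1) := by rcases hn with ⟨k, rfl⟩; exact ⟨k, by omega⟩
    have habs : |t| ^ (n - 1) = theta q n ^ (n - 1) := by
      rw [heven.pow_abs, hpow, theta_pow hq0 hn h1]
    have h01 : |t| = theta q n := by
      have hmono := pow_left_strictMonoOn₀ (M₀ := ℝ) (n := n - 1) (by omega)
      exact hmono.injOn (abs_nonneg t) (theta_pos hq0).le habs
    rcases abs_eq ((theta_pos (n := n) hq0).le) |>.1 h01 with h | h
    · right; right; exact h
    · left; exact h


def Lop (q : ℝ) (n : ℕ) {m : ℕ} (L : Fin m → Bool) (f : ℝ → ℝ) : ℝ → ℝ :=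
  (List.ofFn L).foldr (fun b u => if b then u ∘ hfun q n else Dnq q n u) f

def cnt {m : ℕ} (L : Fin m → Bool) : ℕ :=
  (Finset.univ.filter fun i => L i = true).card

lemma ofFn_cons {m : ℕ} (b : Bool) (L : Fin m → Bool) :
    List.ofFn (Fin.cons b L) = b :: List.ofFn L := by
  rw [List.ofFn_succ]
  simp

lemma Lop_cons {m : ℕ} (b : Bool) (L : Fin m → Bool) (f : ℝ → ℝ) :
    Lop q n (Fin.cons b L) f =
      if b then (Lop q n L f) ∘ hfun q n else Dnq q n (Lop q n L f) := by
  unfold Lop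
  rw [ofFn_cons, List.foldr_cons]

lemma cnt_cons {m : ℕ} (b : Bool) (L : Fin m → Bool) :
    cnt (Fin.cons b L) = (if b then 1 else 0) + cnt L := by
  unfold cnt
  rw [Finset.card_filter, Finset.card_filter, Fin.sum_univ_succ]
  simp

lemma Dnq_eq {t : ℝ} (ht : t ∉ Sset q n) (u : ℝ → ℝ) :
    Dnq q n u t = (u (hfun q n t) - u t) / (hfun q n t - t) := by
  simp [Dnq, ht, hfun]

lemma Dnq_sum {ι : Type*} (s : Finset ι) (F : ι → ℝ → ℝ) {t : ℝ} (ht : t ∉ Sset q n) :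
    Dnq q n (fun x => ∑ i ∈ s, F i x) t = ∑ i ∈ s, Dnq q n (F i) t := by
  simp only [Dnq_eq ht]
  rw [← Finset.sum_div, ← Finset.sum_sub_distrib]

lemma Dnq_mul (hq0 : 0 < q) (hq1 : q < 1) (hn : Odd n) {t : ℝ} (ht : t ∉ Sset q n)
    (u v : ℝ → ℝ) :
    Dnq q n (fun x => u x * v x) t
      = u (hfun q n t) * Dnq q n v t + Dnq q n u t * v t := by
  have hd : hfun q n t - t ≠ 0 := sub_ne_zero.2 (hfun_ne hq0 hq1 hn ht)
  simp only [Dnq_eq ht]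
  field_simp
  ring

lemma key (hq0 : 0 < q) (hq1 : q < 1) (hn : Odd n) (f g : ℝ → ℝ) (m : ℕ) :
    ∀ t ∉ Sset q n,
      (Dnq q n)^[m] (fun x => f x * g x) t
        = ∑ L : Fin m → Bool, Lop q n L f t * (Dnq q n)^[cnt L] g t := by
  induction m with
  | zero =>
    intro t ht
    simp [Lop, cnt]
  | succ m ih =>
    intro t ht
    have hHt : hfun q n t ∉ Sset q n := hfun_not_mem hq0 hn ht
    rw [Function.iterate_succ_apply']
    have hΦ : Dnq q n ((Dnq q n)^[m] fun x => f x * g x) t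
        = Dnq q n (fun s => ∑ L : Fin m → Bool, Lop q n L f s * (Dnq q n)^[cnt L] g s) t := by
      rw [Dnq_eq ht, Dnq_eq ht, ih t ht, ih _ hHt]
    rw [hΦ, Dnq_sum _ _ ht]
    have hterm : ∀ L : Fin m → Bool,
        Dnq q n (fun s => Lop q n L f s * (Dnq q n)^[cnt L] g s) t
          = Lop q n L f (hfun q n t) * (Dnq q n)^[cnt L + 1] g t
            + Dnq q n (Lop q n L f) t * (Dnq q n)^[cnt L] g t := by
      intro L
      rw [Dnq_mul hq0 hq1 hn ht, Function.iterate_succ_apply']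
    simp only [hterm]
    rw [Finset.sum_add_distrib]
    rw [← Fintype.sum_equiv (Fin.consEquiv (fun _ : Fin (m+1) => Bool))
      (fun p => Lop q n (Fin.cons p.1 p.2) f t * (Dnq q n)^[cnt (Fin.cons p.1 p.2)] g t)
      (fun L => Lop q n L f t * (Dnq q n)^[cnt L] g t) (fun p => rfl)]
    rw [Fintype.sum_prod_type, Fintype.sum_bool]
    simp only [Lop_cons, cnt_cons, if_true, if_false]
    simp [Function.comp, add_comm]

theorem stmt6 (q : ℝ) (hq0 : 0 < q) (hq1 : q < 1) (n : ℕ) (hn : Odd n)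
    (f g : ℝ → ℝ) (m : ℕ) (t : ℝ) (ht : t ∉ Sset q n) :
    (Dnq q n)^[m] (fun x => f x * g x) t =
      ∑ k ∈ Finset.range (m + 1),
        (∑ L ∈ Finset.univ.filter
            (fun L : Fin m → Bool =>
              (Finset.univ.filter fun i => L i = true).card = k),
          (List.ofFn L).foldr
            (fun b u => if b then u ∘ hfun q n else Dnq q n u) f t) *
        (Dnq q n)^[k] g t := by
  rw [key hq0 hq1 hn f g m t ht]
  rw [← Finset.sum_fiberwise_of_maps_to (g := fun L : Fin m → Bool => cnt L)
    (t := Finset.range (m+1))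
    (fun L _ => Finset.mem_range.2 (Nat.lt_succ_of_le (by
      have := Finset.card_filter_le (Finset.univ : Finset (Fin m)) (fun i => L i = true)
      simpa [cnt] using this)))]
  refine Finset.sum_congr rfl fun k _ => ?_
  rw [Finset.sum_mul]
  refine Finset.sum_congr rfl fun L hL => ?_
  rw [Finset.mem_filter] at hL
  rw [← hL.2]
  rfl
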